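/- Let Ω ⊂ H^n be an open, horizontally bounded and convex set, d = dist_H(0, ∂Ω) > 0 assuming 0 ∈ Ω, and ξ₀ = (x₀,y₀,t₀) ∈ ∂Ω with d_H(0,ξ₀) = d. If π_{ξ₀} = {(x,y,t) : A·(x−x₀)+B·(y−y₀)+c(t−t₀)=0} is a supporting hyperplane to Ω at ξ₀ with |A|²+|B|²=1, and ζ₀ = (d₀A, d₀B, 0) where d₀ = d/3, then the Euclidean distance in R^{2n} from Pr₁(ζ₀) to Pr₁(π_{ξ₀} ∩ H_{ζ₀}) satisfies dist_H(ζ₀, π_{ξ₀} ∩ H_{ζ₀}) ≤ d₀ + |A·x₀ + B·y₀ + c t₀|/√(1+4c²d₀²) ≤ d/3 + (97^{1/4}/2)·d. -/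

import Mathlib

open scoped BigOperators

/-- A point of the Heisenberg group `ℍⁿ` in real coordinates `(x, y, t)`. -/
abbrev Hpt (n : ℕ) := (Fin n → ℝ) × (Fin n → ℝ) × ℝ

/-- Euclidean dot product on `ℝⁿ`. -/
def dotR {n : ℕ} (a b : Fin n → ℝ) : ℝ := ∑ i, a i * b i

/-- Heisenberg group law. -/
def hmul {n : ℕ} (ξ η : Hpt n) : Hpt n :=
  (ξ.1 + η.1, ξ.2.1 + η.2.1,
    ξ.2.2 + η.2.2 + 2 * (dotR ξ.2.1 η.1 - dotR ξ.1 η.2.1))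

/-- Heisenberg group inverse. -/
def hinv {n : ℕ} (ξ : Hpt n) : Hpt n := (-ξ.1, -ξ.2.1, -ξ.2.2)

/-- Heisenberg dilation `δ_l`. -/
def hdil {n : ℕ} (l : ℝ) (ξ : Hpt n) : Hpt n := (l • ξ.1, l • ξ.2.1, l ^ 2 * ξ.2.2)

/-- The Korányi gauge `N(x,y,t) = ((|x|²+|y|²)² + t²)^(1/4)`. -/
noncomputable def KN {n : ℕ} (ξ : Hpt n) : ℝ :=
  ((dotR ξ.1 ξ.1 + dotR ξ.2.1 ξ.2.1) ^ 2 + ξ.2.2 ^ 2) ^ ((1 : ℝ) / 4)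

/-- The Korányi–Cygan metric. -/
noncomputable def dH {n : ℕ} (ξ η : Hpt n) : ℝ := KN (hmul (hinv η) ξ)

/-- The horizontal plane at `ξ₀`. -/
def Hplane {n : ℕ} (ξ₀ : Hpt n) : Set (Hpt n) :=
  {ξ | ξ.2.2 = ξ₀.2.2 + 2 * (dotR ξ.1 ξ₀.2.1 - dotR ξ₀.1 ξ.2.1)}

/-- Projection onto the first `2n` coordinates. -/
def Pr1 {n : ℕ} (ξ : Hpt n) : (Fin n → ℝ) × (Fin n → ℝ) := (ξ.1, ξ.2.1)

/-- Dot product on `ℝ^{2n}`. -/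
def dot2n {n : ℕ} (p q : (Fin n → ℝ) × (Fin n → ℝ)) : ℝ := dotR p.1 q.1 + dotR p.2 q.2

/-- The horizontal subdifferential of `u` (with domain `Ω`) at `ξ₀`. -/
def subdiffH {n : ℕ} (Ω : Set (Hpt n)) (u : Hpt n → ℝ) (ξ₀ : Hpt n) :
    Set ((Fin n → ℝ) × (Fin n → ℝ)) :=
  {p | ∀ ξ ∈ Ω ∩ Hplane ξ₀, u ξ ≥ u ξ₀ + dot2n p (Pr1 ξ - Pr1 ξ₀)}

/-- `H`-convexity of a set. -/
def HConvexSet {n : ℕ} (S : Set (Hpt n)) : Prop :=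
  ∀ ξ₁ ∈ S, ∀ ξ₂ ∈ S, ξ₁ ∈ Hplane ξ₂ → ∀ l ∈ Set.Icc (0 : ℝ) 1,
    hmul ξ₁ (hdil l (hmul (hinv ξ₁) ξ₂)) ∈ S

/-- `H`-convexity of a function on a set. -/
def HConvexOn {n : ℕ} (S : Set (Hpt n)) (u : Hpt n → ℝ) : Prop :=
  ∀ ξ₁ ∈ S, ∀ ξ₂ ∈ S, ξ₁ ∈ Hplane ξ₂ → ∀ l ∈ Set.Icc (0 : ℝ) 1,
    u (hmul ξ₁ (hdil l (hmul (hinv ξ₁) ξ₂))) ≤ (1 - l) * u ξ₁ + l * u ξ₂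

/-- Horizontal boundedness: the horizontal slices have uniformly bounded diameter. -/
def horizBounded {n : ℕ} (Ω : Set (Hpt n)) : Prop :=
  ∃ M : ℝ, ∀ ξ ∈ Ω, ∀ ζ ∈ Ω ∩ Hplane ξ, ∀ η ∈ Ω ∩ Hplane ξ, dH ζ η ≤ M

section AuxLemmas

lemma dotR_cs {n : ℕ} (a b : Fin n → ℝ) : (dotR a b)^2 ≤ dotR a a * dotR b b := by
  have := Finset.sum_mul_sq_le_sq_mul_sq Finset.univ a b
  simpa [dotR, pow_two] using this

lemma dotR_nonneg {n : ℕ} (a : Fin n → ℝ) : 0 ≤ dotR a a :=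
  Finset.sum_nonneg fun i _ => mul_self_nonneg _

lemma dotR_lin {n : ℕ} (p q : ℝ) (a b v : Fin n → ℝ) :
    dotR (fun i => p * a i + q * b i) v = p * dotR a v + q * dotR b v := by
  simp only [dotR, Finset.mul_sum, ← Finset.sum_add_distrib]
  exact Finset.sum_congr rfl fun i _ => by ring

lemma dotR_lin_right {n : ℕ} (p q : ℝ) (a b v : Fin n → ℝ) :
    dotR v (fun i => p * a i + q * b i) = p * dotR v a + q * dotR v b := by
  simp only [dotR, Finset.mul_sum, ← Finset.sum_add_distrib]
  exact Finset.sum_congr rfl fun i _ => by ring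

lemma dotR_expand {n : ℕ} (p q P R : ℝ) (a b : Fin n → ℝ) :
    dotR (fun i => p * a i + q * b i) (fun i => P * a i + R * b i)
      = p*P*dotR a a + (p*R + q*P)*dotR a b + q*R*dotR b b := by
  simp only [dotR, Finset.mul_sum, ← Finset.sum_add_distrib]
  exact Finset.sum_congr rfl fun i _ => by ring

lemma dotR_comm {n : ℕ} (a b : Fin n → ℝ) : dotR a b = dotR b a := by
  simp [dotR, mul_comm]

lemma dotR_smul_right {n : ℕ} (r : ℝ) (a b : Fin n → ℝ) : dotR a (r • b) = r * dotR a b := by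
  simp only [dotR, Finset.mul_sum, Pi.smul_apply, smul_eq_mul]
  exact Finset.sum_congr rfl fun i _ => by ring

lemma dotR_smul_left {n : ℕ} (r : ℝ) (a b : Fin n → ℝ) : dotR (r • a) b = r * dotR a b := by
  rw [dotR_comm, dotR_smul_right, dotR_comm]

lemma dotR_neg_left {n : ℕ} (a b : Fin n → ℝ) : dotR (-a) b = - dotR a b := by
  simp [dotR, Finset.sum_neg_distrib]

lemma dotR_neg_right {n : ℕ} (a b : Fin n → ℝ) : dotR a (-b) = - dotR a b := by
  simp [dotR, Finset.sum_neg_distrib]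

lemma dotR_sub_right {n : ℕ} (a b c : Fin n → ℝ) : dotR a (b - c) = dotR a b - dotR a c := by
  simp [dotR, mul_sub, Finset.sum_sub_distrib]

lemma dotR_zero_right {n : ℕ} (a : Fin n → ℝ) : dotR a 0 = 0 := by simp [dotR]

lemma cs2aux (u1 u2 p1 p2 q1 q2 : ℝ) (hp1 : 0 ≤ p1) (hp2 : 0 ≤ p2) (hq1 : 0 ≤ q1)
    (hq2 : 0 ≤ q2) (h1 : u1^2 ≤ p1*q1) (h2 : u2^2 ≤ p2*q2) :
    (u1+u2)^2 ≤ (p1+p2)*(q1+q2) := by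
  nlinarith [sq_nonneg (p1*q2 - p2*q1), mul_le_mul h1 h2 (sq_nonneg u2) (mul_nonneg hp1 hq1),
    sq_nonneg (u1*u2), mul_nonneg hp1 hq2, mul_nonneg hp2 hq1,
    sq_nonneg (p1*q2 + p2*q1 - 2*u1*u2)]

lemma keypoly (Q t e : ℝ) (hQ : 0 ≤ Q) (he : 0 < e) (ht : t^2 ≤ 81*e^2) :
    (4*e*Q + t^2)^2 ≤ 97 * e^2 * (Q^2 + t^2) := by
  nlinarith [mul_nonneg (sq_nonneg (Q - 4*e)) (sq_nonneg t),
    mul_le_mul_of_nonneg_left ht (sq_nonneg Q),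
    mul_nonneg (sq_nonneg t) (sub_nonneg.2 ht)]

end AuxLemmas

/-- Quantitative estimate on the distance from `ζ₀ = (d₀A, d₀B, 0)` to the
intersection of a supporting hyperplane with the horizontal plane at `ζ₀`
(twirling of horizontal planes; Proposition 4.4). -/
theorem geometric_estimate {n : ℕ} (Ω : Set (Hpt n)) (hopen : IsOpen Ω)
    (hhb : horizBounded Ω) (hconv : Convex ℝ Ω)
    (h0 : ((0 : Fin n → ℝ), (0 : Fin n → ℝ), (0 : ℝ)) ∈ Ω)
    (ξ₀ : Hpt n) (hξ₀ : ξ₀ ∈ frontier Ω)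
    (d : ℝ) (hd : 0 < d) (hdeq : d = dH ((0 : Fin n → ℝ), (0 : Fin n → ℝ), (0 : ℝ)) ξ₀)
    (hdmin : ∀ η ∈ frontier Ω, d ≤ dH ((0 : Fin n → ℝ), (0 : Fin n → ℝ), (0 : ℝ)) η)
    (A B : Fin n → ℝ) (c : ℝ) (hnorm : dotR A A + dotR B B = 1)
    (hsupp : ∀ ξ ∈ Ω,
      dotR A (ξ.1 - ξ₀.1) + dotR B (ξ.2.1 - ξ₀.2.1) + c * (ξ.2.2 - ξ₀.2.2) ≤ 0) :
    sInf {r : ℝ | ∃ ζ ∈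
        {ξ : Hpt n | dotR A (ξ.1 - ξ₀.1) + dotR B (ξ.2.1 - ξ₀.2.1)
            + c * (ξ.2.2 - ξ₀.2.2) = 0} ∩
          Hplane ((d / 3) • A, (d / 3) • B, (0 : ℝ)),
        r = dH ((d / 3) • A, (d / 3) • B, (0 : ℝ)) ζ}
      ≤ d / 3 + |dotR A ξ₀.1 + dotR B ξ₀.2.1 + c * ξ₀.2.2|
          / Real.sqrt (1 + 4 * c ^ 2 * (d / 3) ^ 2) ∧
    d / 3 + |dotR A ξ₀.1 + dotR B ξ₀.2.1 + c * ξ₀.2.2|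
        / Real.sqrt (1 + 4 * c ^ 2 * (d / 3) ^ 2)
      ≤ d / 3 + ((97 : ℝ) ^ ((1 : ℝ) / 4) / 2) * d := by
  set d₀ : ℝ := d / 3 with hd₀
  have hd₀pos : 0 < d₀ := by rw [hd₀]; linarith
  set s : ℝ := dotR A ξ₀.1 + dotR B ξ₀.2.1 + c * ξ₀.2.2 with hs
  set V : ℝ := 1 + 4 * c ^ 2 * d₀ ^ 2 with hV
  have hVpos : (0:ℝ) < V := by rw [hV]; positivity
  have hsV1 : (1:ℝ) ≤ Real.sqrt V := by
    rw [show (1:ℝ) = Real.sqrt 1 from Real.sqrt_one.symm]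
    exact Real.sqrt_le_sqrt (by rw [hV]; nlinarith [sq_nonneg (c*d₀)])
  have hsVpos : (0:ℝ) < Real.sqrt V := lt_of_lt_of_le one_pos hsV1
  have hsVsq : Real.sqrt V * Real.sqrt V = V := Real.mul_self_sqrt hVpos.le
  set Q : ℝ := dotR ξ₀.1 ξ₀.1 + dotR ξ₀.2.1 ξ₀.2.1 with hQ
  have hQnn : 0 ≤ Q := add_nonneg (dotR_nonneg _) (dotR_nonneg _)
  -- d^4 = Q^2 + t₀^2
  have hd4 : d ^ 4 = Q ^ 2 + ξ₀.2.2 ^ 2 := by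
    have h1 : d = (Q ^ 2 + ξ₀.2.2 ^ 2) ^ ((1:ℝ)/4) := by
      rw [hdeq]
      simp [dH, hmul, hinv, KN, dotR_zero_right, dotR_neg_left, dotR_neg_right, hQ]
    rw [h1, ← Real.rpow_natCast ((Q ^ 2 + ξ₀.2.2 ^ 2) ^ ((1:ℝ)/4)) 4,
      ← Real.rpow_mul (by positivity)]
    norm_num
  have hd3 : d = 3 * d₀ := by rw [hd₀]; ring
  -- Cauchy-Schwarz: s² ≤ V * (Q + t₀²/(4d₀²))
  have hcs1 : (dotR A ξ₀.1 + dotR B ξ₀.2.1)^2 ≤ 1 * Q := by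
    have h := cs2aux (dotR A ξ₀.1) (dotR B ξ₀.2.1) (dotR A A) (dotR B B)
      (dotR ξ₀.1 ξ₀.1) (dotR ξ₀.2.1 ξ₀.2.1) (dotR_nonneg A) (dotR_nonneg B)
      (dotR_nonneg _) (dotR_nonneg _) (dotR_cs _ _) (dotR_cs _ _)
    rw [hnorm] at h
    exact h
  have hsle : s^2 ≤ V * (Q + ξ₀.2.2^2 / (4*d₀^2)) := by
    have h3 : (c * ξ₀.2.2)^2 ≤ (4*c^2*d₀^2) * (ξ₀.2.2^2/(4*d₀^2)) := by
      refine le_of_eq ?_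
      field_simp
    have h := cs2aux (dotR A ξ₀.1 + dotR B ξ₀.2.1) (c * ξ₀.2.2) 1 (4*c^2*d₀^2) Q
      (ξ₀.2.2^2/(4*d₀^2)) one_pos.le (by positivity) hQnn (by positivity) hcs1 h3
    rw [hs, hV]
    exact h
  -- W bound
  have ht81 : ξ₀.2.2^2 ≤ 81 * (d₀^2)^2 := by
    have h9 : d ^ 4 = 81 * (d₀^2)^2 := by rw [hd3]; ring
    nlinarith [sq_nonneg Q]
  have h97 : Real.sqrt 97 ^ 2 = 97 := Real.sq_sqrt (by norm_num)
  have hW : Q + ξ₀.2.2^2/(4*d₀^2) ≤ Real.sqrt 97 / 4 * d^2 := by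
    have hWkey := keypoly Q ξ₀.2.2 (d₀^2) hQnn (by positivity) ht81
    refine le_of_pow_le_pow_left₀ two_ne_zero (by positivity) ?_
    have heq : Q + ξ₀.2.2^2/(4*d₀^2) = (4*(d₀^2)*Q + ξ₀.2.2^2)/(4*d₀^2) := by
      field_simp
    rw [heq, div_pow, div_le_iff₀ (by positivity)]
    calc (4*(d₀^2)*Q + ξ₀.2.2^2)^2 ≤ 97 * (d₀^2)^2 * (Q^2 + ξ₀.2.2^2) := hWkey
      _ = (Real.sqrt 97 / 4 * d^2)^2 * (4*d₀^2)^2 := by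
          have e3 : (Real.sqrt 97 / 4 * d^2)^2 = 97/16 * d^4 := by
            rw [mul_pow, div_pow, h97]; ring
          rw [e3, hd4]; ring
  -- |s| ≤ √V * (97^(1/4)/2 * d)
  have hr2 : ((97:ℝ) ^ ((1:ℝ)/4))^2 = Real.sqrt 97 := by
    rw [← Real.rpow_natCast ((97:ℝ) ^ ((1:ℝ)/4)) 2, ← Real.rpow_mul (by norm_num)]
    rw [Real.sqrt_eq_rpow]
    norm_num
  have habs : |s| ≤ Real.sqrt V * ((97:ℝ) ^ ((1:ℝ)/4) / 2 * d) := by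
    refine le_of_pow_le_pow_left₀ two_ne_zero (by positivity) ?_
    rw [sq_abs, mul_pow, mul_pow (_ / 2), div_pow, hr2]
    have h1 : Real.sqrt V ^ 2 = V := Real.sq_sqrt hVpos.le
    rw [h1]
    calc s^2 ≤ V * (Q + ξ₀.2.2^2 / (4*d₀^2)) := hsle
      _ ≤ V * (Real.sqrt 97 / 4 * d^2) := mul_le_mul_of_nonneg_left hW hVpos.le
      _ = V * (Real.sqrt 97 / 2^2 * d^2) := by norm_num
  have part2 : |s| / Real.sqrt V ≤ (97:ℝ) ^ ((1:ℝ)/4) / 2 * d :=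
    (div_le_iff₀ hsVpos).mpr (habs.trans_eq (mul_comm _ _))
  -- the witness point
  set l : ℝ := (s - d₀) / V with hl
  have hlV : l * V = s - d₀ := div_mul_cancel₀ _ hVpos.ne'
  set x : Fin n → ℝ := fun i => (d₀ + l) * A i + (l*(2*c*d₀)) * B i with hx
  set y : Fin n → ℝ := fun i => (-(l*(2*c*d₀))) * A i + (d₀ + l) * B i with hy
  set tt : ℝ := (0:ℝ) + 2*(dotR x (d₀ • B) - dotR (d₀ • A) y) with htt
  set ζ : Hpt n := (x, y, tt) with hζ
  have hH : ζ ∈ Hplane ((d₀ : ℝ) • A, (d₀ : ℝ) • B, (0:ℝ)) := by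
    show tt = (0:ℝ) + 2*(dotR x (d₀ • B) - dotR (d₀ • A) y)
    rw [htt]
  have key : (d₀ + l) + 2*c*d₀*(l*(2*c*d₀)) = s := by
    rw [hV] at hlV; linear_combination hlV
  have hπ : dotR A (ζ.1 - ξ₀.1) + dotR B (ζ.2.1 - ξ₀.2.1) + c * (ζ.2.2 - ξ₀.2.2) = 0 := by
    show dotR A (x - ξ₀.1) + dotR B (y - ξ₀.2.1) + c * (tt - ξ₀.2.2) = 0
    simp only [dotR_sub_right, htt, dotR_smul_right, dotR_smul_left, hx, hy,
      dotR_lin, dotR_lin_right]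
    rw [dotR_comm B A]
    linear_combination (d₀ + l + 4*c^2*d₀^2*l) * hnorm + key + hs
  -- value of dH ζ₀ ζ
  have hfx : (-x + d₀ • A) = fun i => (-l) * A i + (-(l*(2*c*d₀))) * B i := by
    funext i
    simp only [Pi.add_apply, Pi.neg_apply, Pi.smul_apply, smul_eq_mul, hx]
    ring
  have hfy : (-y + d₀ • B) = fun i => (l*(2*c*d₀)) * A i + (-l) * B i := by
    funext i
    simp only [Pi.add_apply, Pi.neg_apply, Pi.smul_apply, smul_eq_mul, hy]
    ring
  have hdHval : dH ((d₀ : ℝ) • A, (d₀ : ℝ) • B, (0:ℝ)) ζ = ((l^2*V)^2)^((1:ℝ)/4) := by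
    have e0 : dH ((d₀ : ℝ) • A, (d₀ : ℝ) • B, (0:ℝ)) ζ
        = KN (-x + d₀ • A, -y + d₀ • B,
            -tt + 0 + 2*(dotR (-y) (d₀ • A) - dotR (-x) (d₀ • B))) := rfl
    have h3 : -tt + 0 + 2 * (dotR (-y) (d₀ • A) - dotR (-x) (d₀ • B)) = 0 := by
      rw [dotR_neg_left, dotR_neg_left, dotR_smul_right, dotR_smul_right, htt,
        dotR_smul_right, dotR_smul_left, dotR_comm y A]
      ring
    rw [e0, h3]
    simp only [KN]
    rw [hfx, hfy, dotR_expand, dotR_expand]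
    have hSum : (-l)*(-l)*dotR A A + ((-l)*(-(l*(2*c*d₀))) + (-(l*(2*c*d₀)))*(-l))*dotR A B
        + (-(l*(2*c*d₀)))*(-(l*(2*c*d₀)))*dotR B B
        + ((l*(2*c*d₀))*(l*(2*c*d₀))*dotR A A + ((l*(2*c*d₀))*(-l) + (-l)*(l*(2*c*d₀)))*dotR A B
        + (-l)*(-l)*dotR B B) = l^2*V := by
      rw [hV]; linear_combination (l^2 + (l*(2*c*d₀))^2) * hnorm
    rw [hSum]
    norm_num
  have hdHle : dH ((d₀ : ℝ) • A, (d₀ : ℝ) • B, (0:ℝ)) ζ ≤ d₀ + |s| / Real.sqrt V := by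
    rw [hdHval]
    have e1 : ((l^2*V)^2)^((1:ℝ)/4) = Real.sqrt (l^2*V) := by
      rw [← Real.rpow_natCast (l^2*V) 2, ← Real.rpow_mul (by positivity),
        Real.sqrt_eq_rpow]
      norm_num
    rw [e1, Real.sqrt_mul (sq_nonneg l), Real.sqrt_sq_eq_abs]
    have e2 : |l| * Real.sqrt V = |s - d₀| / Real.sqrt V := by
      rw [eq_div_iff hsVpos.ne', mul_assoc, hsVsq, hl, abs_div, abs_of_pos hVpos,
        div_mul_cancel₀ _ hVpos.ne']
    rw [e2]
    have h5 : |s - d₀| ≤ |s| + d₀ := by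
      calc |s - d₀| ≤ |s| + |d₀| := abs_sub _ _
        _ = |s| + d₀ := by rw [abs_of_pos hd₀pos]
    calc |s - d₀| / Real.sqrt V ≤ (|s| + d₀) / Real.sqrt V :=
          (div_le_div_iff_of_pos_right hsVpos).mpr h5
      _ = |s| / Real.sqrt V + d₀ / Real.sqrt V := by rw [add_div]
      _ ≤ |s| / Real.sqrt V + d₀ := by
          have := div_le_self hd₀pos.le hsV1
          linarith
      _ = d₀ + |s| / Real.sqrt V := add_comm _ _
  constructor
  · refine le_trans (csInf_le ?_ ?_) hdHle
    · refine ⟨0, ?_⟩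
      rintro r ⟨ζ', _, rfl⟩
      unfold dH KN
      positivity
    · exact ⟨ζ, ⟨hπ, hH⟩, rfl⟩
  · linarith [part2]
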